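/- Let E > 0 and let φ₁, φ₂ : ℝ → ℂ² be twice-differentiable functions that are simultaneous eigenstates of P̂ and D₊ with eigenvalue √(Eβ), i.e. for j = 1, 2 and all x ∈ ℝ: −i φⱼ′(x) = √(Eβ) φⱼ(x) and (D₊φⱼ)(x) = √(Eβ) φⱼ(x). Then for all a, b ∈ ℂ, the function ψ(x) = a φ₁(x) + b γ¹ φ₂(−x) solves the free time-independent Lévy-Leblond equation with γ₊-eigenvalue E. (Reverse direction of the paper's theorem characterizing solutions via simultaneous eigenstates of the two square roots of the Schrödinger Hamiltonian.) -/

import Mathlib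

open Matrix

noncomputable section

/-- The gamma matrix `γ¹ = [[1,0],[0,−1]]`. -/
def γ1 : Matrix (Fin 2) (Fin 2) ℂ := !![1, 0; 0, -1]

/-- The gamma matrix `γ₊ = [[0,1],[0,0]]`. -/
def γp : Matrix (Fin 2) (Fin 2) ℂ := !![0, 1; 0, 0]

/-- The gamma matrix `γ₋ = [[0,0],[1,0]]`. -/
def γm : Matrix (Fin 2) (Fin 2) ℂ := !![0, 0; 1, 0]

/-- `ψ : ℝ → ℂ²` solves the free time-independent Lévy-Leblond equation
with `γ₊`-eigenvalue `E`: `ψ` is differentiable and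
`β γ₋ ψ(x) − i γ¹ ψ′(x) = E γ₊ ψ(x)` for all `x`. -/
def SolvesLL (β E : ℝ) (ψ : ℝ → (Fin 2 → ℂ)) : Prop :=
  Differentiable ℝ ψ ∧
    ∀ x : ℝ, (β : ℂ) • γm.mulVec (ψ x) - Complex.I • γ1.mulVec (deriv ψ x)
      = (E : ℂ) • γp.mulVec (ψ x)

/-- The operator `P̂`: `(P̂ψ)(x) = −i ψ′(x)`. -/
def Phat (ψ : ℝ → (Fin 2 → ℂ)) : ℝ → (Fin 2 → ℂ) :=
  fun x => (-Complex.I) • deriv ψ x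

/-- The operator `D₊`: `(D₊ψ)(x) = −(1/β) γ₊ ψ″(x) + β γ₋ ψ(x)`. -/
def Dplus (β : ℝ) (ψ : ℝ → (Fin 2 → ℂ)) : ℝ → (Fin 2 → ℂ) :=
  fun x => (-(1 / (β : ℂ))) • γp.mulVec (deriv (deriv ψ) x) + (β : ℂ) • γm.mulVec (ψ x)

/-- The operator `P¹`: `(P¹ψ)(x) = γ¹ ψ(−x)`. -/
def P1 (ψ : ℝ → (Fin 2 → ℂ)) : ℝ → (Fin 2 → ℂ) :=
  fun x => γ1.mulVec (ψ (-x))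


lemma hasDerivAt_mulVec (A : Matrix (Fin 2) (Fin 2) ℂ) (f : ℝ → Fin 2 → ℂ)
    (f' : Fin 2 → ℂ) (x : ℝ) (hf : HasDerivAt f f' x) :
    HasDerivAt (fun x => A.mulVec (f x)) (A.mulVec f') x := by
  rw [hasDerivAt_pi] at hf ⊢
  intro i
  simp only [Matrix.mulVec, dotProduct]
  exact HasDerivAt.fun_sum fun j _ => (hf j).const_mul (A i j)

/-- reverse direction.  If `E > 0` and `φ₁, φ₂` are twice-differentiable
simultaneous eigenstates of `P̂` and `D₊` with eigenvalue `√(Eβ)`, then for all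
`a, b ∈ ℂ` the function `ψ(x) = a φ₁(x) + b γ¹ φ₂(−x)` solves the free time-independent
Lévy-Leblond equation with `γ₊`-eigenvalue `E`. -/
theorem solvesLL_of_simultaneous_eigenstates (β : ℝ) (hβ : 0 < β) (E : ℝ) (hE : 0 < E)
    (φ₁ φ₂ : ℝ → (Fin 2 → ℂ))
    (hφ₁ : Differentiable ℝ φ₁) (hφ₁' : Differentiable ℝ (deriv φ₁))
    (hφ₂ : Differentiable ℝ φ₂) (hφ₂' : Differentiable ℝ (deriv φ₂))
    (hP₁ : ∀ x : ℝ, Phat φ₁ x = ((Real.sqrt (E * β) : ℝ) : ℂ) • φ₁ x)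
    (hD₁ : ∀ x : ℝ, Dplus β φ₁ x = ((Real.sqrt (E * β) : ℝ) : ℂ) • φ₁ x)
    (hP₂ : ∀ x : ℝ, Phat φ₂ x = ((Real.sqrt (E * β) : ℝ) : ℂ) • φ₂ x)
    (hD₂ : ∀ x : ℝ, Dplus β φ₂ x = ((Real.sqrt (E * β) : ℝ) : ℂ) • φ₂ x)
    (a b : ℂ) :
    SolvesLL β E (fun x => a • φ₁ x + b • γ1.mulVec (φ₂ (-x))) := by
  set k : ℂ := ((Real.sqrt (E * β) : ℝ) : ℂ) with hk
  have hβ0 : ((β : ℂ)) ≠ 0 := by exact_mod_cast hβ.ne'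
  have hkk : k * k = (E : ℂ) * (β : ℂ) := by
    rw [hk]
    norm_cast
    exact Real.mul_self_sqrt (mul_pos hE hβ).le
  -- derivative of φⱼ
  have hd1 : ∀ x, deriv φ₁ x = (Complex.I * k) • φ₁ x := by
    intro x
    have h := hP₁ x
    simp only [Phat] at h
    have := congrArg (fun v => Complex.I • v) h
    simpa [smul_smul, Complex.I_mul_I] using this
  have hd2 : ∀ x, deriv φ₂ x = (Complex.I * k) • φ₂ x := by
    intro x
    have h := hP₂ x
    simp only [Phat] at h
    have := congrArg (fun v => Complex.I • v) h
    simpa [smul_smul, Complex.I_mul_I] using this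
  -- second component of D₊ eigenvalue equation
  have hc1 : ∀ x, (β : ℂ) * φ₁ x 0 = k * φ₁ x 1 := by
    intro x
    have h := congrFun (hD₁ x) 1
    simpa [Dplus, γp, γm, Matrix.mulVec, dotProduct, Fin.sum_univ_two] using h
  have hc2 : ∀ x, (β : ℂ) * φ₂ x 0 = k * φ₂ x 1 := by
    intro x
    have h := congrFun (hD₂ x) 1
    simpa [Dplus, γp, γm, Matrix.mulVec, dotProduct, Fin.sum_univ_two] using h
  have he1 : ∀ x, k * φ₁ x 0 = (E : ℂ) * φ₁ x 1 := by
    intro x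
    have h := hc1 x
    apply mul_left_cancel₀ hβ0
    linear_combination k * h + φ₁ x 1 * hkk
  have he2 : ∀ x, k * φ₂ x 0 = (E : ℂ) * φ₂ x 1 := by
    intro x
    have h := hc2 x
    apply mul_left_cancel₀ hβ0
    linear_combination k * h + φ₂ x 1 * hkk
  -- derivative of the combined function
  have hder : ∀ x : ℝ, HasDerivAt (fun x => a • φ₁ x + b • γ1.mulVec (φ₂ (-x)))
      (a • ((Complex.I * k) • φ₁ x) + b • γ1.mulVec ((-(Complex.I * k)) • φ₂ (-x))) x := by
    intro x
    have h1 : HasDerivAt φ₁ ((Complex.I * k) • φ₁ x) x := by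
      have := (hφ₁ x).hasDerivAt
      rwa [hd1 x] at this
    have h2 : HasDerivAt (fun x : ℝ => φ₂ (-x)) ((-(Complex.I * k)) • φ₂ (-x)) x := by
      have hneg : HasDerivAt (fun x : ℝ => -x) (-1) x := (hasDerivAt_id x).neg
      have hphi : HasDerivAt φ₂ ((Complex.I * k) • φ₂ (-x)) (-x) := by
        have := (hφ₂ (-x)).hasDerivAt
        rwa [hd2 (-x)] at this
      have := hphi.scomp x hneg
      simpa [neg_smul, Function.comp_def] using this
    exact (h1.const_smul a).add ((hasDerivAt_mulVec γ1 _ _ x h2).const_smul b)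
  constructor
  · exact fun x => (hder x).differentiableAt
  · intro x
    rw [(hder x).deriv]
    funext i
    have h1 := hc1 x
    have h2 := hc2 (-x)
    have h3 := he1 x
    have h4 := he2 (-x)
    have hI : Complex.I * Complex.I = -1 := Complex.I_mul_I
    fin_cases i <;>
      simp [γ1, γp, γm, Matrix.mulVec, dotProduct, Fin.sum_univ_two, Matrix.vecHead,
        Matrix.vecTail, Function.comp, Pi.smul_apply, smul_eq_mul]
    · linear_combination (-(a * k * φ₁ x 0) + b * k * φ₂ (-x) 0) * hI + a * h3 - b * h4
    · linear_combination a * h1 + b * h2 + (a * k * φ₁ x 1 + b * k * φ₂ (-x) 1) * hI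


end
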